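/- Let d be an integer with d ≡ 0 or 1 (mod 4). Then the function m ↦ N_d(m), where N_d(m) = #{0 ≤ x < 2m : x² ≡ d (mod 4m)}, is multiplicative: N_d(m₁m₂) = N_d(m₁)·N_d(m₂) whenever gcd(m₁, m₂) = 1. -/

import Mathlib

/-- `N_d(m) = #{0 ≤ x < 2m : x² ≡ d (mod 4m)}`. -/
def Ncount (d : ℤ) (m : ℕ) : ℕ :=
  ((Finset.range (2 * m)).filter fun x : ℕ =>
    ((x : ZMod (4 * m)) ^ 2 = (d : ZMod (4 * m)))).card

def Scount (d : ℤ) (n : ℕ) : ℕ :=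
  ((Finset.range n).filter fun x : ℕ => ((x : ZMod n) ^ 2 = (d : ZMod n))).card

lemma Scount_eq (d : ℤ) (n : ℕ) [NeZero n] :
    Scount d n = (Finset.univ.filter fun x : ZMod n => x ^ 2 = (d : ZMod n)).card := by
  unfold Scount
  refine Finset.card_bij (fun x _ => (x : ZMod n)) ?_ ?_ ?_
  · intro a ha
    simp only [Finset.mem_filter, Finset.mem_range] at ha ⊢
    exact ⟨Finset.mem_univ _, ha.2⟩
  · intro a ha b hb hab
    simp only [Finset.mem_filter, Finset.mem_range] at ha hb
    have := congrArg ZMod.val hab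
    rwa [ZMod.val_cast_of_lt ha.1, ZMod.val_cast_of_lt hb.1] at this
  · intro b hb
    simp only [Finset.mem_filter, Finset.mem_univ, true_and] at hb
    refine ⟨b.val, ?_, ?_⟩
    · simp only [Finset.mem_filter, Finset.mem_range]
      refine ⟨ZMod.val_lt b, ?_⟩
      rw [ZMod.natCast_rightInverse b]
      exact hb
    · show ((b.val : ℕ) : ZMod n) = b
      exact ZMod.natCast_rightInverse b

lemma Scount_mul (d : ℤ) {a b : ℕ} (ha : 0 < a) (hb : 0 < b) (h : Nat.Coprime a b) :
    Scount d (a * b) = Scount d a * Scount d b := by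
  haveI : NeZero a := ⟨ha.ne'⟩
  haveI : NeZero b := ⟨hb.ne'⟩
  haveI : NeZero (a * b) := ⟨(Nat.mul_pos ha hb).ne'⟩
  rw [Scount_eq, Scount_eq, Scount_eq]
  have e := ZMod.chineseRemainder h
  have hiff : ∀ x : ZMod (a * b),
      x ∈ Finset.univ.filter (fun x : ZMod (a*b) => x ^ 2 = (d : ZMod (a*b))) ↔
      e.toEquiv x ∈ Finset.univ.filter
        (fun y : ZMod a × ZMod b => y.1 ^ 2 = (d : ZMod a) ∧ y.2 ^ 2 = (d : ZMod b)) := by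
    intro x
    simp only [Finset.mem_filter, Finset.mem_univ, true_and, RingEquiv.toEquiv_eq_coe,
      EquivLike.coe_coe]
    have hdc : e ((d : ℤ) : ZMod (a*b)) = ((d : ZMod a), (d : ZMod b)) := by
      rw [map_intCast]; rfl
    constructor
    · intro hx
      have : e (x ^ 2) = e ((d : ℤ) : ZMod (a*b)) := by rw [hx]
      rw [map_pow, hdc] at this
      exact ⟨congrArg Prod.fst this, congrArg Prod.snd this⟩
    · intro ⟨h1, h2⟩
      have : e (x ^ 2) = e ((d : ℤ) : ZMod (a*b)) := by
        rw [map_pow, hdc]; exact Prod.ext h1 h2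
      exact e.injective this
  rw [Finset.card_equiv e.toEquiv hiff, ← Finset.card_product,
    ← Finset.filter_product, Finset.univ_product_univ]

lemma Scount_four_mul (d : ℤ) (m : ℕ) (hm : 0 < m) :
    Scount d (4 * m) = 2 * Ncount d m := by
  have hle : 2 * m ≤ 4 * m := by omega
  unfold Scount Ncount
  have hdisj : Disjoint
      ((Finset.Ico 0 (2*m)).filter fun x : ℕ => ((x : ZMod (4*m)) ^ 2 = (d : ZMod (4*m))))
      ((Finset.Ico (2*m) (4*m)).filter fun x : ℕ => ((x : ZMod (4*m)) ^ 2 = (d : ZMod (4*m)))) := by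
    apply Finset.disjoint_filter_filter
    rw [Finset.disjoint_left]
    intro x hx1 hx2
    simp only [Finset.mem_Ico] at hx1 hx2
    omega
  rw [Finset.range_eq_Ico, ← Finset.Ico_union_Ico_eq_Ico (Nat.zero_le (2*m)) hle,
    Finset.filter_union, Finset.card_union_of_disjoint hdisj]
  have h0 : ((m : ℕ) : ZMod (4 * m)) * 4 = 0 := by
    have h4 : ((4 * m : ℕ) : ZMod (4 * m)) = 0 := ZMod.natCast_self _
    push_cast at h4
    linear_combination h4
  have hBA : ((Finset.Ico (2*m) (4*m)).filter
        fun x : ℕ => ((x : ZMod (4*m)) ^ 2 = (d : ZMod (4*m)))).card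
      = ((Finset.Ico 0 (2*m)).filter
        fun x : ℕ => ((x : ZMod (4*m)) ^ 2 = (d : ZMod (4*m)))).card := by
    refine Finset.card_bij (fun x _ => x - 2 * m) ?_ ?_ ?_
    · intro y hy
      simp only [Finset.mem_filter, Finset.mem_Ico] at hy ⊢
      refine ⟨⟨by omega, by omega⟩, ?_⟩
      rw [← hy.2]
      have hyy : ((y : ℕ) : ZMod (4*m)) = ((y - 2*m : ℕ) : ZMod (4*m)) + ((2*m : ℕ) : ZMod (4*m)) := by
        rw [← Nat.cast_add]; congr 1; omega
      rw [hyy]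
      push_cast
      linear_combination (-((y - 2*m : ℕ) : ZMod (4*m)) - (m : ZMod (4*m))) * h0
    · intro x hx y hy hxy
      simp only [Finset.mem_filter, Finset.mem_Ico] at hx hy
      omega
    · intro x hx
      simp only [Finset.mem_filter, Finset.mem_Ico] at hx
      refine ⟨x + 2 * m, ?_, by omega⟩
      simp only [Finset.mem_filter, Finset.mem_Ico]
      refine ⟨⟨by omega, by omega⟩, ?_⟩
      rw [← hx.2]
      push_cast
      linear_combination ((x : ZMod (4*m)) + (m : ZMod (4*m))) * h0
  rw [hBA, ← Finset.range_eq_Ico]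
  omega

lemma Scount_four (d : ℤ) (hd : d % 4 = 0 ∨ d % 4 = 1) : Scount d 4 = 2 := by
  unfold Scount
  rcases hd with h | h
  · have h0 : ((d : ℤ) : ZMod 4) = 0 :=
      (ZMod.intCast_zmod_eq_zero_iff_dvd d 4).mpr (Int.dvd_of_emod_eq_zero h)
    rw [Finset.filter_congr (q := fun x : ℕ => ((x : ZMod 4) ^ 2 = 0))
      (fun x _ => by rw [h0])]
    decide
  · have h0 : ((d : ℤ) : ZMod 4) = 1 := by
      conv_lhs => rw [← Int.mul_ediv_add_emod d 4]
      rw [h]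
      push_cast
      have h4 : (4 : ZMod 4) = 0 := by decide
      rw [h4]; ring
    rw [Finset.filter_congr (q := fun x : ℕ => ((x : ZMod 4) ^ 2 = 1))
      (fun x _ => by rw [h0])]
    decide

lemma key (d : ℤ) (hd : d % 4 = 0 ∨ d % 4 = 1)
    (m₁ m₂ : ℕ) (h₁ : 0 < m₁) (h₂ : 0 < m₂) (h : Nat.Coprime m₁ m₂) (hodd : Odd m₁) :
    Ncount d (m₁ * m₂) = Ncount d m₁ * Ncount d m₂ := by
  have hc2 : Nat.Coprime m₁ 2 := by
    exact hodd.coprime_two_right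
  have hc4 : Nat.Coprime m₁ 4 := by
    have : (4 : ℕ) = 2 ^ 2 := by norm_num
    rw [this]; exact hc2.pow_right 2
  have hS1 : Scount d m₁ = Ncount d m₁ := by
    have e1 : Scount d (4 * m₁) = 2 * Ncount d m₁ := Scount_four_mul d m₁ h₁
    rw [Scount_mul d (by norm_num) h₁ hc4.symm, Scount_four d hd] at e1
    omega
  have e2 : Scount d (4 * (m₁ * m₂)) = 2 * Ncount d (m₁ * m₂) :=
    Scount_four_mul d (m₁ * m₂) (Nat.mul_pos h₁ h₂)
  have hrw : 4 * (m₁ * m₂) = m₁ * (4 * m₂) := by ring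
  rw [hrw, Scount_mul d h₁ (by omega) (hc4.mul_right h),
    Scount_four_mul d m₂ h₂, hS1] at e2
  rw [show Ncount d m₁ * (2 * Ncount d m₂) = 2 * (Ncount d m₁ * Ncount d m₂) from by ring] at e2
  omega

/-- For `d ≡ 0, 1 (mod 4)`, the function `m ↦ N_d(m)` is multiplicative on coprime
arguments. -/
theorem Ncount_multiplicative (d : ℤ) (hd : d % 4 = 0 ∨ d % 4 = 1)
    (m₁ m₂ : ℕ) (h₁ : 0 < m₁) (h₂ : 0 < m₂) (h : Nat.Coprime m₁ m₂) :
    Ncount d (m₁ * m₂) = Ncount d m₁ * Ncount d m₂ := by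
  rcases Nat.even_or_odd m₁ with he₁ | ho₁
  · rcases Nat.even_or_odd m₂ with he₂ | ho₂
    · exfalso
      have : (2 : ℕ) ∣ Nat.gcd m₁ m₂ :=
        Nat.dvd_gcd (even_iff_two_dvd.mp he₁) (even_iff_two_dvd.mp he₂)
      rw [h] at this
      omega
    · rw [mul_comm m₁ m₂, key d hd m₂ m₁ h₂ h₁ h.symm ho₂, mul_comm]
  · exact key d hd m₁ m₂ h₁ h₂ h ho₁
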